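/- Let a > 0, s ∈ ℝ, and let v, w : ℝ → ℝ be twice continuously differentiable on (0,∞), where w satisfies the eigenvalue equation (Dw)(y) = s·w(y) for all y > 0. Assume that the functions y ↦ (Dv)(y) w(y) and y ↦ v(y) w(y) are γ_a-integrable on (0,∞), and that e^{-y} y^a (v'(y) w(y) - v(y) w'(y)) → 0 both as y → 0⁺ and as y → ∞. Then ∫_{(0,∞)} (Dv)(y) w(y) dγ_a(y) = s · ∫_{(0,∞)} v(y) w(y) dγ_a(y). -/

import Mathlib

open MeasureTheory Filter Set
open scoped ENNReal Topology

/-- The gamma probability measure `γ_a` on `ℝ`, with density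
`g_a(y) = (1/Γ(a)) e^{-y} y^{a-1}` on `(0,∞)` and `0` on `(-∞,0]`. -/
noncomputable def gammaM (a : ℝ) : Measure ℝ :=
  volume.withDensity fun y =>
    ENNReal.ofReal (if 0 < y then 1 / Real.Gamma a * Real.exp (-y) * y ^ (a - 1) else 0)

/-- The Laguerre differential operator `(D v)(y) = -y v''(y) - (a - y) v'(y)`. -/
noncomputable def lagD (a : ℝ) (v : ℝ → ℝ) : ℝ → ℝ :=
  fun y => -y * deriv (deriv v) y - (a - y) * deriv v y

lemma boundary_hasDerivAt (a : ℝ) (v w : ℝ → ℝ)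
    (hv : ContDiffOn ℝ 2 v (Set.Ioi 0)) (hw : ContDiffOn ℝ 2 w (Set.Ioi 0))
    {x : ℝ} (hx : 0 < x) :
    HasDerivAt (fun y => Real.exp (-y) * y ^ a * (deriv v y * w y - v y * deriv w y))
      (Real.exp (-x) * x ^ (a-1) * ((a - x) * (deriv v x * w x - v x * deriv w x)
        + x * (deriv (deriv v) x * w x - v x * deriv (deriv w) x))) x := by
  have hv1 : ContDiffOn ℝ 1 (deriv v) (Set.Ioi 0) :=
    hv.deriv_of_isOpen isOpen_Ioi le_rfl
  have hw1 : ContDiffOn ℝ 1 (deriv w) (Set.Ioi 0) :=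
    hw.deriv_of_isOpen isOpen_Ioi le_rfl
  have hmem : Set.Ioi (0:ℝ) ∈ 𝓝 x := Ioi_mem_nhds hx
  have hvd : HasDerivAt v (deriv v x) x :=
    (((hv.differentiableOn (by norm_num)).differentiableAt hmem)).hasDerivAt
  have hwd : HasDerivAt w (deriv w x) x :=
    (((hw.differentiableOn (by norm_num)).differentiableAt hmem)).hasDerivAt
  have hdv : HasDerivAt (deriv v) (deriv (deriv v) x) x :=
    (((hv1.differentiableOn (by norm_num)).differentiableAt hmem)).hasDerivAt
  have hdw : HasDerivAt (deriv w) (deriv (deriv w) x) x :=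
    (((hw1.differentiableOn (by norm_num)).differentiableAt hmem)).hasDerivAt
  have hxa : x ^ a = x ^ (a-1) * x := by
    rw [← Real.rpow_add_one hx.ne' (a-1)]; ring_nf
  have hE : HasDerivAt (fun y : ℝ => Real.exp (-y) * y ^ a)
      (Real.exp (-x) * x ^ (a-1) * (a - x)) x := by
    have h1 : HasDerivAt (fun y : ℝ => Real.exp (-y)) (-Real.exp (-x)) x := by
      simpa using (hasDerivAt_neg x).exp
    have h2 : HasDerivAt (fun y : ℝ => y ^ a) (a * x ^ (a-1)) x :=
      Real.hasDerivAt_rpow_const (Or.inl hx.ne')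
    refine (h1.mul h2).congr_deriv ?_
    rw [hxa]; ring
  have hP : HasDerivAt (fun y => deriv v y * w y - v y * deriv w y)
      (deriv (deriv v) x * w x - v x * deriv (deriv w) x) x := by
    refine ((hdv.mul hwd).sub (hvd.mul hdw)).congr_deriv ?_
    ring
  refine (hE.mul hP).congr_deriv ?_
  rw [hxa]; ring

/-- If `v, w` are C² on `(0,∞)`, `w` is an eigenfunction `Dw = s·w` on `(0,∞)`,
`(Dv)·w` and `v·w` are `γ_a`-integrable, and the boundary term
`e^{-y} y^a (v' w - v w')` vanishes at `0⁺` and at `∞`, then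
`∫ (Dv) w dγ_a = s ∫ v w dγ_a`. -/
theorem lagD_eigen_integration_by_parts (a s : ℝ) (ha : 0 < a) (v w : ℝ → ℝ)
    (hv : ContDiffOn ℝ 2 v (Set.Ioi 0)) (hw : ContDiffOn ℝ 2 w (Set.Ioi 0))
    (heig : ∀ y > (0 : ℝ), lagD a w y = s * w y)
    (hint1 : Integrable (fun y => lagD a v y * w y) (gammaM a))
    (hint2 : Integrable (fun y => v y * w y) (gammaM a))
    (hb0 : Tendsto (fun y => Real.exp (-y) * y ^ a * (deriv v y * w y - v y * deriv w y))
      (𝓝[>] 0) (𝓝 0))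
    (hbi : Tendsto (fun y => Real.exp (-y) * y ^ a * (deriv v y * w y - v y * deriv w y))
      atTop (𝓝 0)) :
    ∫ y, lagD a v y * w y ∂(gammaM a) = s * ∫ y, v y * w y ∂(gammaM a) := by
  have hΓ : 0 < Real.Gamma a := Real.Gamma_pos_of_pos ha
  set d : ℝ → ℝ := fun y => if 0 < y then 1 / Real.Gamma a * Real.exp (-y) * y ^ (a - 1) else 0
    with hd_def
  have hd_nonneg : ∀ y, 0 ≤ d y := by
    intro y; simp only [hd_def]
    split
    · positivity
    · exact le_refl 0
  have hd_meas : Measurable d := by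
    apply Measurable.ite measurableSet_Ioi <;> fun_prop
  have hdm : Measurable fun y => (d y).toNNReal := hd_meas.real_toNNReal
  have key : gammaM a = volume.withDensity fun y => ((d y).toNNReal : ℝ≥0∞) := rfl
  have hsmul : ∀ (f : ℝ → ℝ) (y : ℝ), (d y).toNNReal • f y = d y * f y := by
    intro f y
    simp [NNReal.smul_def, Real.coe_toNNReal _ (hd_nonneg y)]
  have hcvt : ∀ f : ℝ → ℝ, Integrable f (gammaM a) →
      Integrable (fun y => d y * f y) volume := by
    intro f hf
    rw [key, integrable_withDensity_iff_integrable_smul hdm] at hf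
    exact hf.congr (by filter_upwards with y using hsmul f y)
  have hIeq : ∀ f : ℝ → ℝ, ∫ y, f y ∂(gammaM a) = ∫ y, d y * f y := by
    intro f
    rw [key, integral_withDensity_eq_integral_smul hdm]
    exact integral_congr_ae (by filter_upwards with y using hsmul f y)
  -- the integrand of the derivative
  set φ : ℝ → ℝ := fun y => d y * (s * (v y * w y)) - d y * (lagD a v y * w y) with hφ_def
  have h1 : Integrable (fun y => d y * (lagD a v y * w y)) volume := hcvt _ hint1
  have h2 : Integrable (fun y => d y * (v y * w y)) volume := hcvt _ hint2
  have hφint : Integrable φ volume := by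
    refine Integrable.sub ?_ h1
    exact (h2.const_mul s).congr (by filter_upwards with y; ring)
  -- the antiderivative
  set G : ℝ → ℝ := fun y =>
    1 / Real.Gamma a * (Real.exp (-y) * y ^ a * (deriv v y * w y - v y * deriv w y)) with hG_def
  set F : ℝ → ℝ := Function.update G 0 0 with hF_def
  have hFderiv : ∀ x ∈ Ioi (0:ℝ), HasDerivAt F (φ x) x := by
    intro x hx
    have hx' : (0:ℝ) < x := hx
    have hG : HasDerivAt G (φ x) x := by
      have := (boundary_hasDerivAt a v w hv hw hx').const_mul (1 / Real.Gamma a)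
      refine this.congr_deriv ?_
      have heq := heig x hx'
      simp only [hφ_def, hd_def, if_pos hx', lagD] at *
      have hxa : x ^ a = x ^ (a-1) * x := by
        rw [← Real.rpow_add_one hx'.ne' (a-1)]; ring_nf
      -- replace s * w x by the eigen equation
      have : s * (v x * w x) = v x * (-x * deriv (deriv w) x - (a - x) * deriv w x) := by
        rw [show v x * (-x * deriv (deriv w) x - (a - x) * deriv w x) = v x * (s * w x) from by
          rw [← heq]]
        ring
      rw [this]
      ring
    refine hG.congr_of_eventuallyEq ?_
    filter_upwards [eventually_ne_nhds hx'.ne'] with y hy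
    simp [hF_def, Function.update_of_ne hy]
  have hFcont : ContinuousWithinAt F (Ici (0:ℝ)) 0 := by
    rw [hF_def]
    apply continuousWithinAt_update_same.mpr
    rw [Ici_sdiff_left]
    have := hb0.const_mul (1 / Real.Gamma a)
    rw [mul_zero] at this
    exact this
  have hFtop : Tendsto F atTop (𝓝 0) := by
    have := hbi.const_mul (1 / Real.Gamma a)
    rw [mul_zero] at this
    apply this.congr'
    filter_upwards [eventually_ne_atTop (0:ℝ)] with y hy
    simp [hF_def, hG_def, Function.update_of_ne hy]
  have hFTC : ∫ x in Ioi (0:ℝ), φ x = 0 - F 0 :=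
    integral_Ioi_of_hasDerivAt_of_tendsto hFcont hFderiv hφint.integrableOn hFtop
  have hF0 : F 0 = 0 := by simp [hF_def]
  have hφ0 : ∫ y, φ y = 0 := by
    rw [← setIntegral_eq_integral_of_forall_compl_eq_zero (s := Ioi (0:ℝ))
      (fun x hx => by
        have hx0 : ¬ (0 < x) := hx
        simp [hφ_def, hd_def, hx0]), hFTC, hF0, sub_zero]
  rw [hIeq, hIeq]
  have h2' : Integrable (fun y => d y * (s * (v y * w y))) volume :=
    (h2.const_mul s).congr (by filter_upwards with y; ring)
  have hsub : ∫ y, φ y = (∫ y, d y * (s * (v y * w y))) - ∫ y, d y * (lagD a v y * w y) := by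
    simp only [hφ_def]
    exact integral_sub h2' h1
  have hconst : ∫ y, d y * (s * (v y * w y)) = s * ∫ y, d y * (v y * w y) := by
    rw [← integral_const_mul]
    congr 1; funext y; ring
  rw [hφ0, hconst] at hsub
  linarith
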